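/- Let f, g be entire functions with |ĝ(k)| ≤ C I_k(a) for all k ∈ ℤ and some a > 0, where ĝ(k) are the Fourier coefficients of the 2π-periodic extension g(z) = ∑_k ĝ(k) e^{ikz}. Then the discrete-heat evolution g(·, t) defined by ĝ(k,t) = e^{−2t} ∑_{m} ĝ(m,0) I_{m−k}(2t) satisfies |ĝ(k,t)| ≤ C I_k(2t + a) for all k∈ℤ and t ≥ 0. -/

import Mathlib

open MeasureTheory

/-- Modified Bessel function of integer order `k`, complex argument:
`I_k(z) = (1/π) ∫₀^π e^{z cos θ} cos(kθ) dθ`. -/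
noncomputable def besselI (k : ℤ) (z : ℂ) : ℂ :=
  (1 / (Real.pi : ℂ)) * ∫ θ in (0:ℝ)..Real.pi, Complex.exp (z * Real.cos θ) * Real.cos (k * θ)

/-- Modified Bessel function of integer order `k`, real argument. -/
noncomputable def besselIR (k : ℤ) (x : ℝ) : ℝ :=
  (1 / Real.pi) * ∫ θ in (0:ℝ)..Real.pi, Real.exp (x * Real.cos θ) * Real.cos (k * θ)

/-- coefficient of the Chebyshev expansion of `cos θ ^ n` -/
noncomputable def cosCoef (n : ℕ) (k : ℤ) : ℝ :=
  (1 / Real.pi) * ∫ θ in (0:ℝ)..Real.pi, Real.cos θ ^ n * Real.cos (k * θ)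

lemma cont1 (n : ℕ) (k : ℤ) : Continuous fun θ : ℝ => Real.cos θ ^ n * Real.cos (k * θ) := by
  fun_prop

lemma cont1' (x : ℝ) (k : ℤ) :
    Continuous fun θ : ℝ => Real.exp (x * Real.cos θ) * Real.cos (k * θ) := by
  fun_prop

lemma intcos (k : ℤ) (hk : k ≠ 0) : (∫ θ in (0:ℝ)..Real.pi, Real.cos (k * θ)) = 0 := by
  have : (∫ θ in (0:ℝ)..Real.pi, Real.cos ((k:ℝ) * θ)) = Real.sin ((k:ℝ) * Real.pi) / k := by
    rw [intervalIntegral.integral_comp_mul_left (c := (k:ℝ)) Real.cos (by exact_mod_cast hk)]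
    rw [integral_cos]
    simp
  rw [this, Real.sin_int_mul_pi, zero_div]

lemma cosCoef_zero (k : ℤ) : cosCoef 0 k = if k = 0 then 1 else 0 := by
  unfold cosCoef
  split_ifs with h
  · simp [h, Real.pi_ne_zero]
  · simp [intcos k h]

lemma cos_mul_cos (b θ : ℝ) :
    Real.cos θ * Real.cos (b * θ) =
      (Real.cos ((b - 1) * θ) + Real.cos ((b + 1) * θ)) / 2 := by
  have h1 : (b - 1) * θ = b * θ - θ := by ring
  have h2 : (b + 1) * θ = b * θ + θ := by ring
  rw [h1, h2, Real.cos_sub, Real.cos_add]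
  ring

lemma cosCoef_rec (n : ℕ) (k : ℤ) :
    cosCoef (n + 1) k = (cosCoef n (k - 1) + cosCoef n (k + 1)) / 2 := by
  unfold cosCoef
  have : ∀ θ : ℝ, Real.cos θ ^ (n + 1) * Real.cos (k * θ) =
      (Real.cos θ ^ n * Real.cos ((k - 1 : ℤ) * θ)
        + Real.cos θ ^ n * Real.cos ((k + 1 : ℤ) * θ)) / 2 := by
    intro θ
    have := cos_mul_cos (k : ℝ) θ
    push_cast
    rw [pow_succ]
    rw [mul_assoc, this]
    ring
  rw [intervalIntegral.integral_congr (g := fun θ =>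
      (Real.cos θ ^ n * Real.cos ((k - 1 : ℤ) * θ)
        + Real.cos θ ^ n * Real.cos ((k + 1 : ℤ) * θ)) / 2)
    (fun θ _ => this θ)]
  rw [intervalIntegral.integral_div, intervalIntegral.integral_add
    ((cont1 n (k-1)).intervalIntegrable _ _) ((cont1 n (k+1)).intervalIntegrable _ _)]
  ring

lemma cosCoef_neg (n : ℕ) (k : ℤ) : cosCoef n (-k) = cosCoef n k := by
  unfold cosCoef
  congr 1
  apply intervalIntegral.integral_congr
  intro θ _
  push_cast
  rw [neg_mul, Real.cos_neg]

lemma cosCoef_nonneg (n : ℕ) (k : ℤ) : 0 ≤ cosCoef n k := by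
  induction n generalizing k with
  | zero => rw [cosCoef_zero]; split_ifs <;> norm_num
  | succ n ih =>
    rw [cosCoef_rec]
    have h1 := ih (k - 1); have h2 := ih (k + 1)
    linarith

lemma cosCoef_eq_zero (n : ℕ) (k : ℤ) (h : (n : ℤ) < |k|) : cosCoef n k = 0 := by
  induction n generalizing k with
  | zero =>
    rw [cosCoef_zero, if_neg]
    rintro rfl; simp at h
  | succ n ih =>
    rcases le_or_gt 0 k with h' | h'
    · rw [abs_of_nonneg h'] at h
      rw [cosCoef_rec, ih _ (by rw [abs_of_nonneg (by omega)]; omega),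
        ih _ (by rw [abs_of_nonneg (by omega)]; omega)]
      norm_num
    · rw [abs_of_neg h'] at h
      rw [cosCoef_rec, ih _ (by rw [abs_of_nonpos (by omega)]; omega),
        ih _ (by rw [abs_of_neg (by omega)]; omega)]
      norm_num

lemma summable_cosCoef_mul (n : ℕ) (g : ℤ → ℝ) (j : ℤ) :
    Summable (fun k : ℤ => cosCoef n (k + j) * g k) := by
  apply summable_of_ne_finset_zero (s := Finset.Icc (-(n:ℤ) - j) ((n:ℤ) - j))
  intro k hk
  simp only [Finset.mem_Icc, not_and_or, not_le] at hk
  have : cosCoef n (k + j) = 0 := by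
    apply cosCoef_eq_zero
    rcases le_or_gt 0 (k + j) with h' | h'
    · rw [abs_of_nonneg h']; omega
    · rw [abs_of_neg h']; omega
  rw [this, zero_mul]

lemma summable_cosCoef_mul' (n : ℕ) (g : ℤ → ℝ) :
    Summable (fun k : ℤ => cosCoef n k * g k) := by
  simpa using summable_cosCoef_mul n g 0

lemma summable_cosCoef (n : ℕ) : Summable (fun m : ℤ => cosCoef n m) := by
  have := summable_cosCoef_mul n (fun _ => 1) 0
  simpa using this

lemma tsum_cosCoef (n : ℕ) : ∑' k : ℤ, cosCoef n k = 1 := by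
  induction n with
  | zero =>
    rw [tsum_eq_single 0 (by intro b hb; rw [cosCoef_zero, if_neg hb])]
    rw [cosCoef_zero, if_pos rfl]
  | succ n ih =>
    have h1 : Summable (fun k : ℤ => cosCoef n (k + (-1)) / 2) := by
      simpa using (summable_cosCoef_mul n (fun _ => 1/2) (-1)).congr (fun k => by ring)
    have h2 : Summable (fun k : ℤ => cosCoef n (k + 1) / 2) := by
      simpa using (summable_cosCoef_mul n (fun _ => 1/2) 1).congr (fun k => by ring)
    calc ∑' k : ℤ, cosCoef (n+1) k
        = ∑' k : ℤ, (cosCoef n (k + (-1)) / 2 + cosCoef n (k + 1) / 2) := by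
          apply tsum_congr; intro k; rw [cosCoef_rec]; ring_nf
      _ = (∑' k : ℤ, cosCoef n (k + (-1)) / 2) + ∑' k : ℤ, cosCoef n (k + 1) / 2 :=
          Summable.tsum_add h1 h2
      _ = 1 := by
          have e1 : ∑' k : ℤ, cosCoef n (k + (-1)) / 2 = ∑' k : ℤ, cosCoef n k / 2 := by
            simpa using (Equiv.addRight (-1 : ℤ)).tsum_eq (fun k => cosCoef n k / 2)
          have e2 : ∑' k : ℤ, cosCoef n (k + 1) / 2 = ∑' k : ℤ, cosCoef n k / 2 := by
            simpa using (Equiv.addRight (1 : ℤ)).tsum_eq (fun k => cosCoef n k / 2)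
          rw [e1, e2, tsum_div_const, ih]
          norm_num

lemma cos_pow_eq (n : ℕ) (θ : ℝ) :
    Real.cos θ ^ n = ∑' k : ℤ, cosCoef n k * Real.cos (k * θ) := by
  induction n with
  | zero =>
    rw [tsum_eq_single 0 (by intro b hb; rw [cosCoef_zero, if_neg hb, zero_mul])]
    rw [cosCoef_zero, if_pos rfl]
    simp
  | succ n ih =>
    have h1 : Summable (fun k : ℤ => cosCoef n (k + (-1)) * Real.cos (k * θ) / 2) :=
      (summable_cosCoef_mul n (fun k => Real.cos (k * θ) / 2) (-1)).congr (fun k => by ring)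
    have h2 : Summable (fun k : ℤ => cosCoef n (k + 1) * Real.cos (k * θ) / 2) :=
      (summable_cosCoef_mul n (fun k => Real.cos (k * θ) / 2) 1).congr (fun k => by ring)
    calc Real.cos θ ^ (n + 1)
        = Real.cos θ * ∑' k : ℤ, cosCoef n k * Real.cos (k * θ) := by
          rw [pow_succ, ← ih]; ring
      _ = ∑' k : ℤ, (cosCoef n k * Real.cos (((k - 1 : ℤ) : ℝ) * θ) / 2
            + cosCoef n k * Real.cos (((k + 1 : ℤ) : ℝ) * θ) / 2) := by
          rw [← tsum_mul_left]
          apply tsum_congr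
          intro k
          have := cos_mul_cos (k : ℝ) θ
          push_cast
          rw [show Real.cos θ * (cosCoef n k * Real.cos (k * θ))
              = cosCoef n k * (Real.cos θ * Real.cos (k * θ)) by ring, this]
          ring
      _ = (∑' k : ℤ, cosCoef n k * Real.cos (((k - 1 : ℤ) : ℝ) * θ) / 2)
            + ∑' k : ℤ, cosCoef n k * Real.cos (((k + 1 : ℤ) : ℝ) * θ) / 2 := by
          apply Summable.tsum_add
          · rw [← (Equiv.addRight (1 : ℤ)).summable_iff]
            exact h2.congr (fun k => by
              simp only [Function.comp, Equiv.coe_addRight]; push_cast; ring_nf)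
          · rw [← (Equiv.addRight (-1 : ℤ)).summable_iff]
            exact h1.congr (fun k => by
              simp only [Function.comp, Equiv.coe_addRight]; push_cast; ring_nf)
      _ = ∑' k : ℤ, cosCoef (n + 1) k * Real.cos (k * θ) := by
          have e1 : ∑' k : ℤ, cosCoef n k * Real.cos (((k - 1 : ℤ) : ℝ) * θ) / 2
              = ∑' k : ℤ, cosCoef n (k + 1) * Real.cos (k * θ) / 2 := by
            have := (Equiv.addRight (1 : ℤ)).tsum_eq
              (fun k : ℤ => cosCoef n k * Real.cos (((k - 1 : ℤ) : ℝ) * θ) / 2)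
            rw [← this]
            apply tsum_congr; intro k
            simp only [Equiv.coe_addRight]
            push_cast
            ring_nf
          have e2 : ∑' k : ℤ, cosCoef n k * Real.cos (((k + 1 : ℤ) : ℝ) * θ) / 2
              = ∑' k : ℤ, cosCoef n (k + (-1)) * Real.cos (k * θ) / 2 := by
            have := (Equiv.addRight (-1 : ℤ)).tsum_eq
              (fun k : ℤ => cosCoef n k * Real.cos (((k + 1 : ℤ) : ℝ) * θ) / 2)
            rw [← this]
            apply tsum_congr; intro k
            simp only [Equiv.coe_addRight]
            push_cast
            ring_nf
          rw [e1, e2, ← Summable.tsum_add (h2.congr (fun k => by ring)) (h1.congr (fun k => by ring))]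
          apply tsum_congr; intro k
          rw [cosCoef_rec]
          have : k + (-1) = k - 1 := by ring
          rw [this]
          ring

lemma real_exp_tsum (y : ℝ) : Real.exp y = ∑' n : ℕ, y ^ n / n.factorial := by
  rw [Real.exp_eq_exp_ℝ, NormedSpace.exp_eq_tsum_div]

lemma besselIR_eq_tsum (k : ℤ) (x : ℝ) :
    besselIR k x = ∑' n : ℕ, x ^ n / n.factorial * cosCoef n k := by
  unfold besselIR cosCoef
  have hpt : ∀ θ : ℝ, Real.exp (x * Real.cos θ) * Real.cos (k * θ)
      = ∑' n : ℕ, x ^ n / n.factorial * (Real.cos θ ^ n * Real.cos (k * θ)) := by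
    intro θ
    rw [real_exp_tsum (x * Real.cos θ), ← tsum_mul_right]
    apply tsum_congr; intro n
    rw [mul_pow]; ring
  have hint : ∀ n : ℕ, IntervalIntegrable
      (fun θ => x ^ n / n.factorial * (Real.cos θ ^ n * Real.cos (k * θ)))
      volume 0 Real.pi := by
    intro n
    exact (continuous_const.mul (cont1 n k)).intervalIntegrable _ _
  have hb : ∀ n : ℕ, (∫ θ in Set.Ioc (0:ℝ) Real.pi,
        ‖x ^ n / n.factorial * (Real.cos θ ^ n * Real.cos (k * θ))‖)
      ≤ Real.pi * (|x| ^ n / n.factorial) := by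
    intro n
    calc (∫ θ in Set.Ioc (0:ℝ) Real.pi,
            ‖x ^ n / n.factorial * (Real.cos θ ^ n * Real.cos (k * θ))‖)
        ≤ ∫ _ in Set.Ioc (0:ℝ) Real.pi, |x| ^ n / n.factorial := by
          apply MeasureTheory.integral_mono_of_nonneg
          · filter_upwards with θ; positivity
          · exact integrable_const _
          · filter_upwards with θ
            rw [norm_mul, norm_mul]
            have h1 : ‖x ^ n / (n.factorial:ℝ)‖ = |x| ^ n / n.factorial := by
              rw [norm_div, norm_pow, Real.norm_eq_abs, Real.norm_natCast]
            have h2 : ‖Real.cos θ ^ n‖ ≤ 1 := by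
              rw [norm_pow]
              exact pow_le_one₀ (norm_nonneg _)
                (by rw [Real.norm_eq_abs]; exact Real.abs_cos_le_one θ)
            have h3 : ‖Real.cos ((k:ℝ) * θ)‖ ≤ 1 := by
              rw [Real.norm_eq_abs]; exact Real.abs_cos_le_one _
            calc ‖x ^ n / (n.factorial:ℝ)‖ * (‖Real.cos θ ^ n‖ * ‖Real.cos ((k:ℝ) * θ)‖)
                ≤ ‖x ^ n / (n.factorial:ℝ)‖ * (1 * 1) := by
                  apply mul_le_mul_of_nonneg_left _ (norm_nonneg _)
                  exact mul_le_mul h2 h3 (norm_nonneg _) zero_le_one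
              _ = |x| ^ n / n.factorial := by rw [h1]; ring
      _ = Real.pi * (|x| ^ n / n.factorial) := by
          rw [MeasureTheory.setIntegral_const]
          rw [measureReal_def, Real.volume_Ioc]
          rw [smul_eq_mul]
          congr 1
          rw [sub_zero, ENNReal.toReal_ofReal Real.pi_pos.le]
  have hswap : (∫ θ in (0:ℝ)..Real.pi, Real.exp (x * Real.cos θ) * Real.cos (k * θ))
      = ∑' n : ℕ, ∫ θ in (0:ℝ)..Real.pi,
          x ^ n / n.factorial * (Real.cos θ ^ n * Real.cos (k * θ)) := by
    rw [intervalIntegral.integral_congr (fun θ _ => hpt θ)]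
    rw [intervalIntegral.integral_of_le Real.pi_pos.le]
    rw [← MeasureTheory.integral_tsum_of_summable_integral_norm]
    · apply tsum_congr; intro n
      rw [intervalIntegral.integral_of_le Real.pi_pos.le]
    · intro n
      exact (hint n).1
    · apply Summable.of_nonneg_of_le
        (fun n => integral_nonneg (fun θ => norm_nonneg _)) hb
      exact (Real.summable_pow_div_factorial |x|).mul_left Real.pi
  rw [hswap, ← tsum_mul_left]
  apply tsum_congr; intro n
  rw [intervalIntegral.integral_const_mul]
  ring

lemma summable_series (k : ℤ) (x : ℝ) :
    Summable (fun n : ℕ => x ^ n / n.factorial * cosCoef n k) := by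
  apply Summable.of_norm_bounded (Real.summable_pow_div_factorial |x|)
  intro n
  rw [norm_mul, norm_div, norm_pow, Real.norm_eq_abs, Real.norm_natCast]
  have h1 : ‖cosCoef n k‖ ≤ 1 := by
    rw [Real.norm_eq_abs, abs_of_nonneg (cosCoef_nonneg n k)]
    calc cosCoef n k ≤ ∑' m : ℤ, cosCoef n m :=
          Summable.le_tsum (summable_cosCoef n) k (fun m _ => cosCoef_nonneg n m)
      _ = 1 := tsum_cosCoef n
  calc |x| ^ n / (n.factorial:ℝ) * ‖cosCoef n k‖ ≤ |x| ^ n / (n.factorial:ℝ) * 1 := by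
        apply mul_le_mul_of_nonneg_left h1; positivity
    _ = |x| ^ n / n.factorial := mul_one _

lemma besselIR_nonneg (k : ℤ) (x : ℝ) (hx : 0 ≤ x) : 0 ≤ besselIR k x := by
  rw [besselIR_eq_tsum]
  apply tsum_nonneg
  intro n
  have := cosCoef_nonneg n k
  positivity

lemma besselIR_le_exp (k : ℤ) (x : ℝ) (hx : 0 ≤ x) : besselIR k x ≤ Real.exp x := by
  rw [besselIR_eq_tsum, real_exp_tsum]
  apply Summable.tsum_le_tsum _ (summable_series k x) (Real.summable_pow_div_factorial x)
  intro n
  have h1 : cosCoef n k ≤ 1 := by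
    calc cosCoef n k ≤ ∑' m : ℤ, cosCoef n m :=
          Summable.le_tsum (summable_cosCoef n) k (fun m _ => cosCoef_nonneg n m)
      _ = 1 := tsum_cosCoef n
  calc x ^ n / (n.factorial:ℝ) * cosCoef n k ≤ x ^ n / (n.factorial:ℝ) * 1 := by
        apply mul_le_mul_of_nonneg_left h1; positivity
    _ = x ^ n / n.factorial := mul_one _

lemma besselIR_neg (k : ℤ) (x : ℝ) : besselIR (-k) x = besselIR k x := by
  unfold besselIR
  congr 1
  apply intervalIntegral.integral_congr
  intro θ _
  push_cast
  rw [neg_mul, Real.cos_neg]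

lemma summable_prod_aux (x : ℝ) (hx : 0 ≤ x) :
    Summable (fun p : ℕ × ℤ => x ^ p.1 / p.1.factorial * cosCoef p.1 p.2) := by
  rw [summable_prod_of_nonneg (by
    intro p
    have := cosCoef_nonneg p.1 p.2
    positivity)]
  constructor
  · intro n
    show Summable fun m : ℤ => x ^ n / n.factorial * cosCoef n m
    exact (summable_cosCoef n).mul_left _
  · apply Summable.of_nonneg_of_le (fun n => tsum_nonneg (fun m => by
      have := cosCoef_nonneg n m; positivity)) _
      (Real.summable_pow_div_factorial x)
    intro n
    show (∑' m : ℤ, x ^ n / n.factorial * cosCoef n m) ≤ x ^ n / n.factorial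
    rw [tsum_mul_left, tsum_cosCoef, mul_one]

lemma summable_besselIR (x : ℝ) (hx : 0 ≤ x) :
    Summable (fun m : ℤ => besselIR m x) := by
  have h := (summable_prod_aux x hx).prod_symm
  have h2 := (summable_prod_of_nonneg (f := fun p : ℤ × ℕ =>
      x ^ p.2 / p.2.factorial * cosCoef p.2 p.1) (by
    intro p
    have := cosCoef_nonneg p.2 p.1
    positivity)).mp (h.congr (fun p => rfl))
  apply h2.2.congr
  intro m
  rw [← besselIR_eq_tsum]

lemma exp_cos_eq (x : ℝ) (hx : 0 ≤ x) (θ : ℝ) :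
    Real.exp (x * Real.cos θ) = ∑' m : ℤ, besselIR m x * Real.cos (m * θ) := by
  have hsum := summable_prod_aux x hx
  have hf : Summable (fun p : ℕ × ℤ =>
      x ^ p.1 / p.1.factorial * cosCoef p.1 p.2 * Real.cos (p.2 * θ)) := by
    apply Summable.of_norm_bounded hsum
    intro p
    rw [norm_mul]
    have h0 : (0:ℝ) ≤ x ^ p.1 / p.1.factorial * cosCoef p.1 p.2 := by
      have := cosCoef_nonneg p.1 p.2; positivity
    calc ‖x ^ p.1 / p.1.factorial * cosCoef p.1 p.2‖ * ‖Real.cos (p.2 * θ)‖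
        ≤ ‖x ^ p.1 / p.1.factorial * cosCoef p.1 p.2‖ * 1 := by
          apply mul_le_mul_of_nonneg_left _ (norm_nonneg _)
          rw [Real.norm_eq_abs]; exact Real.abs_cos_le_one _
      _ = x ^ p.1 / p.1.factorial * cosCoef p.1 p.2 := by
          rw [mul_one, Real.norm_eq_abs, abs_of_nonneg h0]
  calc Real.exp (x * Real.cos θ)
      = ∑' n : ℕ, x ^ n / n.factorial * Real.cos θ ^ n := by
        rw [real_exp_tsum (x * Real.cos θ)]
        apply tsum_congr; intro n
        rw [mul_pow]; ring
    _ = ∑' n : ℕ, ∑' m : ℤ,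
          x ^ n / n.factorial * cosCoef n m * Real.cos (m * θ) := by
        apply tsum_congr; intro n
        rw [cos_pow_eq n θ, ← tsum_mul_left]
        apply tsum_congr; intro m
        ring
    _ = ∑' m : ℤ, ∑' n : ℕ,
          x ^ n / n.factorial * cosCoef n m * Real.cos (m * θ) :=
        (Summable.tsum_comm (f := fun (n : ℕ) (m : ℤ) =>
          x ^ n / n.factorial * cosCoef n m * Real.cos (m * θ)) hf).symm
    _ = ∑' m : ℤ, besselIR m x * Real.cos (m * θ) := by
        apply tsum_congr; intro m
        rw [besselIR_eq_tsum, ← tsum_mul_right]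

lemma cos_mul_cos' (a b θ : ℝ) :
    Real.cos (a * θ) * Real.cos (b * θ) =
      (Real.cos ((a - b) * θ) + Real.cos ((a + b) * θ)) / 2 := by
  have h1 : (a - b) * θ = a * θ - b * θ := by ring
  have h2 : (a + b) * θ = a * θ + b * θ := by ring
  rw [h1, h2, Real.cos_sub, Real.cos_add]
  ring

lemma cont2 (y : ℝ) (j : ℤ) :
    Continuous fun θ : ℝ => Real.exp (y * Real.cos θ) * Real.cos (j * θ) := by
  fun_prop

lemma integral_exp_cos (y : ℝ) (j : ℤ) :
    (∫ θ in (0:ℝ)..Real.pi, Real.exp (y * Real.cos θ) * Real.cos (j * θ))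
      = Real.pi * besselIR j y := by
  unfold besselIR
  field_simp

lemma cos_prod_integral (y : ℝ) (m k : ℤ) :
    (∫ θ in (0:ℝ)..Real.pi,
        Real.cos (m * θ) * (Real.exp (y * Real.cos θ) * Real.cos (k * θ)))
      = Real.pi * (besselIR (m - k) y + besselIR (m + k) y) / 2 := by
  have hpt : ∀ θ : ℝ, Real.cos ((m:ℝ) * θ) * (Real.exp (y * Real.cos θ) * Real.cos ((k:ℝ) * θ))
      = (Real.exp (y * Real.cos θ) * Real.cos (((m - k : ℤ) : ℝ) * θ)
         + Real.exp (y * Real.cos θ) * Real.cos (((m + k : ℤ) : ℝ) * θ)) / 2 := by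
    intro θ
    have := cos_mul_cos' (m : ℝ) (k : ℝ) θ
    push_cast
    calc Real.cos ((m:ℝ) * θ) * (Real.exp (y * Real.cos θ) * Real.cos ((k:ℝ) * θ))
        = Real.exp (y * Real.cos θ) * (Real.cos ((m:ℝ) * θ) * Real.cos ((k:ℝ) * θ)) := by ring
      _ = _ := by rw [this]; ring
  rw [intervalIntegral.integral_congr (fun θ _ => hpt θ)]
  rw [intervalIntegral.integral_div, intervalIntegral.integral_add
    ((cont2 y (m - k)).intervalIntegrable _ _) ((cont2 y (m + k)).intervalIntegrable _ _)]
  rw [integral_exp_cos, integral_exp_cos]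
  ring

lemma summable_bessel_mul (x y : ℝ) (hx : 0 ≤ x) (hy : 0 ≤ y) (j : ℤ) :
    Summable (fun m : ℤ => besselIR m x * besselIR (m + j) y) := by
  apply Summable.of_nonneg_of_le
    (fun m => mul_nonneg (besselIR_nonneg m x hx) (besselIR_nonneg _ y hy))
    (fun m => ?_) ((summable_besselIR x hx).mul_right (Real.exp y))
  exact mul_le_mul_of_nonneg_left (besselIR_le_exp _ y hy) (besselIR_nonneg m x hx)

lemma besselIR_add (x y : ℝ) (hx : 0 ≤ x) (hy : 0 ≤ y) (k : ℤ) :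
    ∑' m : ℤ, besselIR m x * besselIR (m - k) y = besselIR k (x + y) := by
  set F : ℤ → ℝ → ℝ := fun m θ =>
    besselIR m x * Real.cos (m * θ) * (Real.exp (y * Real.cos θ) * Real.cos (k * θ)) with hF
  have hFcont : ∀ m : ℤ, Continuous (F m) := by
    intro m; apply Continuous.mul; · fun_prop
    · fun_prop
  have hFint : ∀ m : ℤ, Integrable (F m) (volume.restrict (Set.Ioc (0:ℝ) Real.pi)) := by
    intro m
    exact ((hFcont m).intervalIntegrable 0 Real.pi).1
  have hFnorm : ∀ m : ℤ, (∫ θ in Set.Ioc (0:ℝ) Real.pi, ‖F m θ‖)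
      ≤ besselIR m x * Real.exp y * Real.pi := by
    intro m
    calc (∫ θ in Set.Ioc (0:ℝ) Real.pi, ‖F m θ‖)
        ≤ ∫ _ in Set.Ioc (0:ℝ) Real.pi, besselIR m x * Real.exp y := by
          apply MeasureTheory.integral_mono_of_nonneg
          · filter_upwards with θ; exact norm_nonneg _
          · exact integrable_const _
          · filter_upwards with θ
            rw [hF]
            simp only [norm_mul]
            have e1 : ‖besselIR m x‖ = besselIR m x :=
              Real.norm_of_nonneg (besselIR_nonneg m x hx)
            have e2 : ‖Real.cos ((m:ℝ) * θ)‖ ≤ 1 := by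
              rw [Real.norm_eq_abs]; exact Real.abs_cos_le_one _
            have e3 : ‖Real.exp (y * Real.cos θ)‖ ≤ Real.exp y := by
              rw [Real.norm_eq_abs, Real.abs_exp]
              apply Real.exp_le_exp.2
              calc y * Real.cos θ ≤ y * 1 :=
                    mul_le_mul_of_nonneg_left (Real.cos_le_one θ) hy
                _ = y := mul_one y
            have e4 : ‖Real.cos ((k:ℝ) * θ)‖ ≤ 1 := by
              rw [Real.norm_eq_abs]; exact Real.abs_cos_le_one _
            calc ‖besselIR m x‖ * ‖Real.cos ((m:ℝ) * θ)‖
                  * (‖Real.exp (y * Real.cos θ)‖ * ‖Real.cos ((k:ℝ) * θ)‖)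
                ≤ ‖besselIR m x‖ * 1 * (Real.exp y * 1) := by
                  apply mul_le_mul
                  · exact mul_le_mul_of_nonneg_left e2 (norm_nonneg _)
                  · exact mul_le_mul e3 e4 (norm_nonneg _) (Real.exp_pos y).le
                  · positivity
                  · positivity
              _ = besselIR m x * Real.exp y := by rw [e1]; ring
      _ = besselIR m x * Real.exp y * Real.pi := by
          rw [MeasureTheory.setIntegral_const, measureReal_def, Real.volume_Ioc, smul_eq_mul, sub_zero,
            ENNReal.toReal_ofReal Real.pi_pos.le]
          ring
  have hFsum : Summable (fun m : ℤ => ∫ θ in Set.Ioc (0:ℝ) Real.pi, ‖F m θ‖) := by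
    apply Summable.of_nonneg_of_le
      (fun m => integral_nonneg (fun θ => norm_nonneg _)) hFnorm
    exact ((summable_besselIR x hx).mul_right (Real.exp y)).mul_right Real.pi
  have hkey := MeasureTheory.integral_tsum_of_summable_integral_norm hFint hFsum
  -- pointwise sum
  have hpt : ∀ θ : ℝ, (∑' m : ℤ, F m θ)
      = Real.exp ((x + y) * Real.cos θ) * Real.cos (k * θ) := by
    intro θ
    have : (∑' m : ℤ, F m θ)
        = (∑' m : ℤ, besselIR m x * Real.cos (m * θ))
            * (Real.exp (y * Real.cos θ) * Real.cos (k * θ)) := by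
      rw [← tsum_mul_right]
    rw [this, ← exp_cos_eq x hx θ]
    rw [show (x + y) * Real.cos θ = x * Real.cos θ + y * Real.cos θ by ring, Real.exp_add]
    ring
  -- each integral
  have hint : ∀ m : ℤ, (∫ θ in Set.Ioc (0:ℝ) Real.pi, F m θ)
      = besselIR m x * (Real.pi * (besselIR (m - k) y + besselIR (m + k) y) / 2) := by
    intro m
    rw [← intervalIntegral.integral_of_le Real.pi_pos.le]
    have : (∫ θ in (0:ℝ)..Real.pi, F m θ) = besselIR m x *
        ∫ θ in (0:ℝ)..Real.pi,
          Real.cos (m * θ) * (Real.exp (y * Real.cos θ) * Real.cos (k * θ)) := by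
      rw [← intervalIntegral.integral_const_mul]
      apply intervalIntegral.integral_congr
      intro θ _
      rw [hF]; ring
    rw [this, cos_prod_integral]
  -- rhs integral
  have hrhs : (∫ θ in Set.Ioc (0:ℝ) Real.pi, Real.exp ((x + y) * Real.cos θ) * Real.cos (k * θ))
      = Real.pi * besselIR k (x + y) := by
    rw [← intervalIntegral.integral_of_le Real.pi_pos.le, integral_exp_cos]
  rw [MeasureTheory.integral_congr_ae (Filter.Eventually.of_forall hpt), hrhs] at hkey
  -- now hkey : ∑' m, ∫ F m = π * besselIR k (x+y)
  have hkey2 : ∑' m : ℤ, besselIR m x *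
      (Real.pi * (besselIR (m - k) y + besselIR (m + k) y) / 2)
      = Real.pi * besselIR k (x + y) := by
    rw [← hkey]
    exact (tsum_congr hint).symm
  -- split and symmetrize
  have s1 : Summable (fun m : ℤ => besselIR m x * besselIR (m - k) y) := by
    have := summable_bessel_mul x y hx hy (-k)
    apply this.congr
    intro m
    rw [show m + (-k) = m - k by ring]
  have s2 : Summable (fun m : ℤ => besselIR m x * besselIR (m + k) y) :=
    summable_bessel_mul x y hx hy k
  have hsym : ∑' m : ℤ, besselIR m x * besselIR (m + k) y
      = ∑' m : ℤ, besselIR m x * besselIR (m - k) y := by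
    have := (Equiv.neg ℤ).tsum_eq (fun m : ℤ => besselIR m x * besselIR (m - k) y)
    rw [← this]
    apply tsum_congr
    intro m
    simp only [Equiv.neg_apply]
    rw [← besselIR_neg m x, show -m - k = -(m + k) by ring, ← besselIR_neg (m + k) y]
  have expand : ∑' m : ℤ, besselIR m x *
      (Real.pi * (besselIR (m - k) y + besselIR (m + k) y) / 2)
      = Real.pi * ∑' m : ℤ, besselIR m x * besselIR (m - k) y := by
    calc ∑' m : ℤ, besselIR m x *
        (Real.pi * (besselIR (m - k) y + besselIR (m + k) y) / 2)
        = ∑' m : ℤ, (Real.pi / 2) * (besselIR m x * besselIR (m - k) y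
            + besselIR m x * besselIR (m + k) y) := by
          apply tsum_congr; intro m; ring
      _ = (Real.pi / 2) * ((∑' m : ℤ, besselIR m x * besselIR (m - k) y)
            + ∑' m : ℤ, besselIR m x * besselIR (m + k) y) := by
          rw [tsum_mul_left, Summable.tsum_add s1 s2]
      _ = Real.pi * ∑' m : ℤ, besselIR m x * besselIR (m - k) y := by
          rw [hsym]; ring
  rw [expand] at hkey2
  have hpi := Real.pi_ne_zero
  exact mul_left_cancel₀ hpi hkey2

lemma besselI_ofReal (k : ℤ) (x : ℝ) :
    besselI k ((x : ℝ) : ℂ) = ((besselIR k x : ℝ) : ℂ) := by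
  unfold besselI besselIR
  have h : (∫ θ in (0:ℝ)..Real.pi,
        Complex.exp ((x:ℂ) * (Real.cos θ : ℝ)) * ((Real.cos ((k:ℝ) * θ) : ℝ) : ℂ))
      = ∫ θ in (0:ℝ)..Real.pi,
        ((Real.exp (x * Real.cos θ) * Real.cos ((k:ℝ) * θ) : ℝ) : ℂ) := by
    apply intervalIntegral.integral_congr
    intro θ _
    show Complex.exp ((x:ℂ) * (Real.cos θ : ℝ)) * ((Real.cos ((k:ℝ) * θ) : ℝ) : ℂ)
      = ((Real.exp (x * Real.cos θ) * Real.cos ((k:ℝ) * θ) : ℝ) : ℂ)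
    rw [Complex.ofReal_mul, ← Complex.ofReal_mul, Complex.ofReal_exp]
  rw [h, intervalIntegral.integral_ofReal]
  push_cast
  ring

lemma besselIR_pos (x : ℝ) : 0 < besselIR 0 x := by
  unfold besselIR
  have key : Real.pi * Real.exp (-|x|)
      ≤ ∫ θ in (0:ℝ)..Real.pi, Real.exp (x * Real.cos θ) * Real.cos ((0:ℤ) * θ) := by
    have hle : ∀ θ ∈ Set.Icc (0:ℝ) Real.pi, Real.exp (-|x|) ≤
        Real.exp (x * Real.cos θ) * Real.cos ((0:ℤ) * θ) := by
      intro θ _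
      have h0 : Real.cos (((0:ℤ):ℝ) * θ) = 1 := by norm_num
      rw [h0, mul_one]
      apply Real.exp_le_exp.2
      calc -|x| ≤ -(|x| * |Real.cos θ|) := by
            apply neg_le_neg
            calc |x| * |Real.cos θ| ≤ |x| * 1 :=
                  mul_le_mul_of_nonneg_left (Real.abs_cos_le_one θ) (abs_nonneg x)
              _ = |x| := mul_one _
        _ = -(|x * Real.cos θ|) := by rw [abs_mul]
        _ ≤ x * Real.cos θ := neg_abs_le _
    calc Real.pi * Real.exp (-|x|)
        = ∫ _ in (0:ℝ)..Real.pi, Real.exp (-|x|) := by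
          rw [intervalIntegral.integral_const, smul_eq_mul, sub_zero]
      _ ≤ ∫ θ in (0:ℝ)..Real.pi, Real.exp (x * Real.cos θ) * Real.cos ((0:ℤ) * θ) := by
          apply intervalIntegral.integral_mono_on Real.pi_pos.le
            (intervalIntegrable_const) ((cont1' x 0).intervalIntegrable _ _) hle
  have : 0 < Real.pi * Real.exp (-|x|) := by positivity
  have hpos : 0 < ∫ θ in (0:ℝ)..Real.pi, Real.exp (x * Real.cos θ) * Real.cos ((0:ℤ) * θ) :=
    lt_of_lt_of_le this key
  have h1 : 0 < 1 / Real.pi := by positivity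
  exact mul_pos h1 hpos

theorem stmt_18' (a C : ℝ) (ha : 0 < a)
    (c : ℤ → ℂ)
    (hc : ∀ k : ℤ, ‖c k‖ ≤ C * besselIR k a) :
    ∀ (k : ℤ) (t : ℝ), 0 ≤ t →
      ‖Complex.exp (-2 * (t : ℂ)) *
          ∑' m : ℤ, c m * besselI (m - k) (2 * (t : ℂ))‖ ≤
        C * besselIR k (2 * t + a) := by
  intro k t ht
  have hC : 0 ≤ C := by
    have h0 := hc 0
    have hpos := besselIR_pos a
    nlinarith [norm_nonneg (c 0)]
  have h2t : (0:ℝ) ≤ 2 * t := by linarith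
  have hcast : (2 * (t : ℂ)) = ((2 * t : ℝ) : ℂ) := by push_cast; ring
  -- rewrite besselI values as real
  have hval : ∀ m : ℤ, besselI (m - k) (2 * (t : ℂ))
      = ((besselIR (m - k) (2 * t) : ℝ) : ℂ) := by
    intro m
    rw [hcast, besselI_ofReal]
  -- abs of exp factor
  have habs_exp : ‖Complex.exp (-2 * (t : ℂ))‖ ≤ 1 := by
    rw [Complex.norm_exp]
    apply Real.exp_le_one_iff.2
    have : (-2 * (t : ℂ)).re = -2 * t := by simp
    rw [this]; linarith
  -- term bound
  have hterm : ∀ m : ℤ, ‖c m * besselI (m - k) (2 * (t : ℂ))‖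
      ≤ C * (besselIR m a * besselIR (m - k) (2 * t)) := by
    intro m
    rw [hval m, norm_mul]
    have h1 : ‖((besselIR (m - k) (2 * t) : ℝ) : ℂ)‖ = besselIR (m - k) (2 * t) := by
      rw [Complex.norm_real, Real.norm_of_nonneg (besselIR_nonneg _ _ h2t)]
    rw [h1]
    have h2 : ‖c m‖ ≤ C * besselIR m a := hc m
    calc ‖c m‖ * besselIR (m - k) (2 * t)
        ≤ C * besselIR m a * besselIR (m - k) (2 * t) :=
          mul_le_mul_of_nonneg_right h2 (besselIR_nonneg _ _ h2t)
      _ = C * (besselIR m a * besselIR (m - k) (2 * t)) := by ring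
  have hsummaj : Summable (fun m : ℤ => C * (besselIR m a * besselIR (m - k) (2 * t))) := by
    apply Summable.mul_left
    have := summable_bessel_mul a (2 * t) ha.le h2t (-k)
    apply this.congr
    intro m
    rw [show m + (-k) = m - k by ring]
  have hsummable : Summable (fun m : ℤ => ‖c m * besselI (m - k) (2 * (t : ℂ))‖) :=
    Summable.of_nonneg_of_le (fun m => norm_nonneg _) hterm hsummaj
  have htsum : ‖∑' m : ℤ, c m * besselI (m - k) (2 * (t : ℂ))‖
      ≤ C * besselIR k (2 * t + a) := by
    calc ‖∑' m : ℤ, c m * besselI (m - k) (2 * (t : ℂ))‖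
        ≤ ∑' m : ℤ, ‖c m * besselI (m - k) (2 * (t : ℂ))‖ :=
          norm_tsum_le_tsum_norm hsummable
      _ ≤ ∑' m : ℤ, C * (besselIR m a * besselIR (m - k) (2 * t)) :=
          Summable.tsum_le_tsum hterm hsummable hsummaj
      _ = C * ∑' m : ℤ, besselIR m a * besselIR (m - k) (2 * t) := tsum_mul_left
      _ = C * besselIR k (a + 2 * t) := by
          rw [besselIR_add a (2 * t) ha.le h2t k]
      _ = C * besselIR k (2 * t + a) := by rw [add_comm]
  rw [norm_mul]
  calc ‖Complex.exp (-2 * (t : ℂ))‖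
        * ‖∑' m : ℤ, c m * besselI (m - k) (2 * (t : ℂ))‖
      ≤ 1 * (C * besselIR k (2 * t + a)) := by
        apply mul_le_mul habs_exp htsum (norm_nonneg _)
        norm_num
    _ = C * besselIR k (2 * t + a) := one_mul _

/-- Discrete heat evolution of Fourier coefficients bounded by Bessel functions:
if |c(k)| ≤ C I_k(a), then the evolved coefficients
c(k,t) = e^{-2t} ∑_m c(m) I_{m-k}(2t) satisfy |c(k,t)| ≤ C I_k(2t + a). -/
theorem stmt_18 (a C : ℝ) (ha : 0 < a)
    (f g : ℂ → ℂ) (hf : Differentiable ℂ f) (hg : Differentiable ℂ g)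
    (c : ℤ → ℂ)
    (hgc : ∀ z : ℂ, g z = ∑' k : ℤ, c k * Complex.exp (Complex.I * (k : ℂ) * z))
    (hc : ∀ k : ℤ, ‖c k‖ ≤ C * besselIR k a) :
    ∀ (k : ℤ) (t : ℝ), 0 ≤ t →
      ‖Complex.exp (-2 * (t : ℂ)) *
          ∑' m : ℤ, c m * besselI (m - k) (2 * (t : ℂ))‖ ≤
        C * besselIR k (2 * t + a) := by
  intro k t ht
  exact stmt_18' a C ha c hc k t ht
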